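/- Let T > 0 and let φ₁, φ₂ : [0,T) → ℝ be nondecreasing differentiable functions with p₀·(T/(T-t))² ≤ φᵢ(t) ≤ p₂(T/(T-t)) for some p₀ > 0 and polynomial p₂ with nonnegative coefficients (i = 1,2). Let V₁, V₂ : [0,T) → [0,∞) be differentiable with V₁' ≤ φ₁·(-a₁V₁ + b₁V₂) and V₂' ≤ φ₂·(-a₂V₂ + b₂V₁), where a₁,a₂,b₁,b₂ > 0 and a₁a₂ > b₁b₂. Then there exist q₁, q₂ > 0 and δ > 0 such that W(t) := q₁·V₁(t)/φ₁(t) + q₂·V₂(t)/φ₂(t) satisfies W(t) ≤ W(0)·exp(-δ·∫₀ᵗ min{φ₁(s),φ₂(s)} ds), and consequently V₁(t) → 0 and V₂(t) → 0 as t → T⁻, with V₁ and V₂ prescribed-time exponentially convergent. -/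

import Mathlib

open Filter Set

lemma polyExp_tendsto (p : Polynomial ℝ) {κ : ℝ} (hκ : 0 < κ) :
    Tendsto (fun x : ℝ => p.eval x * Real.exp (-(κ * x))) atTop (nhds 0) := by
  have h1 : Tendsto (fun y : ℝ =>
      (p.comp (Polynomial.C κ⁻¹ * Polynomial.X)).eval y / Real.exp y) atTop (nhds 0) :=
    Polynomial.tendsto_div_exp_atTop _
  have h2 : Tendsto (fun x : ℝ => κ * x) atTop atTop :=
    Tendsto.const_mul_atTop hκ tendsto_id
  have h3 := h1.comp h2
  convert h3 using 2 with x
  simp only [Function.comp_apply, Polynomial.eval_comp, Polynomial.eval_mul, Polynomial.eval_C,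
    Polynomial.eval_X, Real.exp_neg, div_eq_mul_inv, inv_mul_cancel_left₀ hκ.ne']

lemma polyExp_bounded (p : Polynomial ℝ) {κ : ℝ} (hκ : 0 < κ) :
    ∃ C : ℝ, 0 < C ∧ ∀ x : ℝ, 1 ≤ x → p.eval x * Real.exp (-(κ * x)) ≤ C := by
  set g : ℝ → ℝ := fun x => p.eval x * Real.exp (-(κ * x)) with hg
  have hcont : Continuous g := by
    apply p.continuous.mul
    exact Real.continuous_exp.comp (by continuity)
  have hev : ∀ᶠ x in atTop, g x < 1 := (polyExp_tendsto p hκ).eventually_lt_const one_pos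
  obtain ⟨X, hX⟩ := hev.exists_forall_of_atTop
  obtain ⟨C, hC⟩ := (isCompact_Icc (a := (1:ℝ)) (b := X)).exists_bound_of_continuousOn
    hcont.continuousOn
  refine ⟨max C 1, lt_of_lt_of_le one_pos (le_max_right _ _), fun x hx => ?_⟩
  rcases le_total x X with h | h
  · exact le_trans (le_trans (le_abs_self _) (hC x ⟨hx, h⟩)) (le_max_left _ _)
  · exact le_trans (hX x h).le (le_max_right _ _)

/-- A signal `q` on `[0,T)` is prescribed-time exponentially convergent (to zero). -/
def PTExpConv (T : ℝ) (q : ℝ → ℝ) : Prop :=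
  ∃ (T' c p₀ : ℝ) (φ : ℝ → ℝ), 0 ≤ T' ∧ T' < T ∧ 0 < c ∧ 0 < p₀ ∧
    (∀ t ∈ Set.Ioo T' T, p₀ * (T / (T - t)) ^ 2 ≤ φ t) ∧
    (∀ t ∈ Set.Ioo T' T, |q t| ≤ c * Real.exp (-∫ s in T'..t, φ s))

lemma deriv_nonneg_of_monotoneOn {T : ℝ} {φ φ' : ℝ → ℝ}
    (hd : ∀ t ∈ Set.Ico 0 T, HasDerivAt φ (φ' t) t)
    (hm : MonotoneOn φ (Set.Ico 0 T)) :
    ∀ t ∈ Set.Ico 0 T, 0 ≤ φ' t := by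
  intro t ht
  have h1 : HasDerivWithinAt φ (φ' t) (Set.Ioi t) t := (hd t ht).hasDerivWithinAt
  rw [hasDerivWithinAt_iff_tendsto_slope] at h1
  have hsub : Set.Ioi t \ {t} = Set.Ioi t :=
    Set.diff_singleton_eq_self (fun h => lt_irrefl t h)
  rw [hsub] at h1
  refine ge_of_tendsto h1 ?_
  have hmem : Set.Ioo t T ∈ nhdsWithin t (Set.Ioi t) :=
    Ioo_mem_nhdsGT_of_mem ⟨le_refl t, ht.2⟩
  filter_upwards [hmem] with y hy
  rw [slope_def_field]
  apply div_nonneg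
  · exact sub_nonneg.2 (hm ht ⟨le_trans ht.1 hy.1.le, hy.2⟩ hy.1.le)
  · exact sub_nonneg.2 hy.1.le

lemma aux_conv (T δ p₀ C : ℝ) (hT : 0 < T) (hδ : 0 < δ) (hp₀ : 0 < p₀) (hC : 0 ≤ C)
    (p₂ : Polynomial ℝ) (V φ m : ℝ → ℝ)
    (hVnn : ∀ t ∈ Set.Ico 0 T, 0 ≤ V t)
    (hφnn : ∀ t ∈ Set.Ico 0 T, 0 ≤ φ t)
    (hφub : ∀ t ∈ Set.Ico 0 T, φ t ≤ p₂.eval (T / (T - t)))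
    (hmlb : ∀ t ∈ Set.Ico 0 T, p₀ * (T / (T - t)) ^ 2 ≤ m t)
    (hmint : ∀ t ∈ Set.Ico 0 T, IntervalIntegrable m MeasureTheory.volume 0 t)
    (hbound : ∀ t ∈ Set.Ico 0 T,
      V t ≤ C * (φ t * Real.exp (-δ * ∫ s in (0:ℝ)..t, m s))) :
    Tendsto V (nhdsWithin T (Set.Iio T)) (nhds 0) ∧ PTExpConv T V := by
  set κ : ℝ := δ * p₀ * T with hκdef
  have hκ : 0 < κ := by positivity
  have hx1 : ∀ t ∈ Set.Ico (0:ℝ) T, 1 ≤ T / (T - t) := by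
    intro t ht
    have hTt : (0:ℝ) < T - t := sub_pos.2 ht.2
    rw [one_le_div hTt]
    linarith [ht.1]
  -- lower bound on the integral of m
  have Mlb : ∀ t ∈ Set.Ico (0:ℝ) T,
      p₀ * T * (T / (T - t) - 1) ≤ ∫ s in (0:ℝ)..t, m s := by
    intro t ht
    have hTt : (0:ℝ) < T - t := sub_pos.2 ht.2
    have hne : ∀ s ∈ Set.Icc (0:ℝ) t, T - s ≠ 0 := by
      intro s hs
      have : s < T := lt_of_le_of_lt hs.2 ht.2
      exact (sub_pos.2 this).ne'
    have hcont : ContinuousOn (fun s => p₀ * (T / (T - s)) ^ 2) (Set.Icc 0 t) := by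
      refine continuousOn_const.mul (ContinuousOn.pow ?_ 2)
      exact continuousOn_const.div (continuousOn_const.sub continuousOn_id) hne
    have hint : IntervalIntegrable (fun s => p₀ * (T / (T - s)) ^ 2)
        MeasureTheory.volume 0 t := by
      rw [intervalIntegrable_iff_integrableOn_Icc_of_le ht.1]
      exact hcont.integrableOn_compact isCompact_Icc
    have heq : ∫ s in (0:ℝ)..t, p₀ * (T / (T - s)) ^ 2
        = p₀ * T ^ 2 * (T - t)⁻¹ - p₀ * T ^ 2 * (T - 0)⁻¹ := by
      apply intervalIntegral.integral_eq_sub_of_hasDerivAt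
      · intro s hs
        rw [Set.uIcc_of_le ht.1] at hs
        have hTs : (0:ℝ) < T - s := sub_pos.2 (lt_of_le_of_lt hs.2 ht.2)
        have h1 : HasDerivAt (fun s : ℝ => T - s) (0 - 1) s :=
          (hasDerivAt_const s T).sub (hasDerivAt_id s)
        have h2 : HasDerivAt (fun s : ℝ => (T - s)⁻¹) (-(0 - 1) / (T - s) ^ 2) s :=
          h1.inv hTs.ne'
        have h3 := h2.const_mul (p₀ * T ^ 2)
        convert h3 using 1
        · rfl
        · rw [div_pow]; ring
      · exact hint
    have hmono : ∫ s in (0:ℝ)..t, p₀ * (T / (T - s)) ^ 2 ≤ ∫ s in (0:ℝ)..t, m s := by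
      apply intervalIntegral.integral_mono_on ht.1 hint (hmint t ht)
      intro s hs
      exact hmlb s ⟨hs.1, lt_of_le_of_lt hs.2 ht.2⟩
    rw [heq] at hmono
    have hcomp : p₀ * T ^ 2 * (T - t)⁻¹ - p₀ * T ^ 2 * (T - 0)⁻¹
        = p₀ * T * (T / (T - t) - 1) := by
      have hT0 : T ≠ 0 := hT.ne'
      field_simp
      ring
    linarith [hmono, hcomp.ge, hcomp.le]
  -- x(t) → ∞
  have hx : Tendsto (fun t => T / (T - t)) (nhdsWithin T (Set.Iio T)) atTop := by
    have h1 : Tendsto (fun t => T - t) (nhdsWithin T (Set.Iio T)) (nhdsWithin 0 (Set.Ioi 0)) := by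
      apply tendsto_nhdsWithin_of_tendsto_nhds_of_eventually_within
      · have hc : Tendsto (fun t : ℝ => T - t) (nhds T) (nhds (T - T)) :=
          (continuous_const.sub continuous_id).tendsto T
        simpa using hc.mono_left nhdsWithin_le_nhds
      · filter_upwards [self_mem_nhdsWithin] with t ht
        exact sub_pos.2 (mem_Iio.1 ht)
    have h2 := tendsto_inv_nhdsGT_zero.comp h1
    have h3 := h2.const_mul_atTop hT
    refine h3.congr fun t => ?_
    simp [Function.comp, div_eq_mul_inv]
  have hev : ∀ᶠ t in nhdsWithin T (Set.Iio T), t ∈ Set.Ico 0 T := by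
    have h1 : Set.Ioi (0:ℝ) ∈ nhdsWithin T (Set.Iio T) :=
      mem_nhdsWithin_of_mem_nhds (Ioi_mem_nhds hT)
    filter_upwards [h1, self_mem_nhdsWithin] with t ht1 ht2
    exact ⟨le_of_lt ht1, ht2⟩
  -- the dominating function g
  set g : ℝ → ℝ := fun y => p₂.eval y * Real.exp (-(κ * (y - 1)))
  have hgsplit : ∀ y : ℝ, g y = Real.exp κ * (p₂.eval y * Real.exp (-(κ * y))) := by
    intro y
    have : Real.exp (-(κ * (y - 1))) = Real.exp κ * Real.exp (-(κ * y)) := by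
      rw [← Real.exp_add]; congr 1; ring
    simp only [g, this]; ring
  have hg0 : Tendsto g atTop (nhds 0) := by
    have := (polyExp_tendsto p₂ hκ).const_mul (Real.exp κ)
    rw [mul_zero] at this
    exact this.congr fun y => (hgsplit y).symm
  have hVle : ∀ t ∈ Set.Ico (0:ℝ) T, V t ≤ C * g (T / (T - t)) := by
    intro t ht
    have hexp : Real.exp (-δ * ∫ s in (0:ℝ)..t, m s)
        ≤ Real.exp (-(κ * (T / (T - t) - 1))) := by
      apply Real.exp_le_exp.2
      rw [hκdef]
      have h := mul_le_mul_of_nonneg_left (Mlb t ht) hδ.le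
      nlinarith [h]
    have hp2nn : 0 ≤ p₂.eval (T / (T - t)) := le_trans (hφnn t ht) (hφub t ht)
    calc V t ≤ C * (φ t * Real.exp (-δ * ∫ s in (0:ℝ)..t, m s)) := hbound t ht
      _ ≤ C * g (T / (T - t)) := by
          apply mul_le_mul_of_nonneg_left _ hC
          exact mul_le_mul (hφub t ht) hexp (Real.exp_pos _).le hp2nn
  constructor
  · -- Tendsto
    apply squeeze_zero'
    · filter_upwards [hev] with t ht using hVnn t ht
    · filter_upwards [hev] with t ht using hVle t ht
    · have := (hg0.comp hx).const_mul C
      rw [mul_zero] at this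
      exact this
  · -- PTExpConv
    obtain ⟨C₀, hC₀pos, hC₀⟩ := polyExp_bounded p₂ (half_pos hκ)
    set c : ℝ := C * (Real.exp (κ / 2) * C₀) + 1 with hcdef
    have hcpos : 0 < c := by
      have h1 : 0 ≤ C * (Real.exp (κ / 2) * C₀) :=
        mul_nonneg hC (mul_nonneg (Real.exp_pos _).le hC₀pos.le)
      rw [hcdef]; linarith
    refine ⟨0, c, δ * p₀ / 2, fun s => δ / 2 * m s, le_refl 0, hT, hcpos, by positivity, ?_, ?_⟩
    · intro t ht
      have ht' : t ∈ Set.Ico (0:ℝ) T := ⟨ht.1.le, ht.2⟩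
      have h := mul_le_mul_of_nonneg_left (hmlb t ht') (half_pos hδ).le
      nlinarith [h]
    · intro t ht
      have ht' : t ∈ Set.Ico (0:ℝ) T := ⟨ht.1.le, ht.2⟩
      rw [abs_of_nonneg (hVnn t ht')]
      have hI : ∫ s in (0:ℝ)..t, δ / 2 * m s = δ / 2 * ∫ s in (0:ℝ)..t, m s :=
        intervalIntegral.integral_const_mul _ _
      rw [hI]
      set I : ℝ := ∫ s in (0:ℝ)..t, m s with hIdef
      set x : ℝ := T / (T - t) with hxdef
      have hx1t : 1 ≤ x := hx1 t ht'
      have hsplit : Real.exp (-δ * I) = Real.exp (-(δ / 2) * I) * Real.exp (-(δ / 2) * I) := by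
        rw [← Real.exp_add]; congr 1; ring
      have e1 : Real.exp (-(δ / 2) * I) ≤ Real.exp (-(κ / 2 * (x - 1))) := by
        apply Real.exp_le_exp.2
        rw [hκdef]
        have h := mul_le_mul_of_nonneg_left (Mlb t ht') (half_pos hδ).le
        nlinarith [h]
      have hp2nn : 0 ≤ p₂.eval x := le_trans (hφnn t ht') (hφub t ht')
      have eexp : Real.exp (-(κ / 2 * (x - 1)))
          = Real.exp (κ / 2) * Real.exp (-(κ / 2 * x)) := by
        rw [← Real.exp_add]; congr 1; ring
      have B1 : C * (φ t * Real.exp (-(δ / 2) * I)) ≤ c := by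
        calc C * (φ t * Real.exp (-(δ / 2) * I))
            ≤ C * (p₂.eval x * Real.exp (-(κ / 2 * (x - 1)))) := by
              apply mul_le_mul_of_nonneg_left _ hC
              exact mul_le_mul (hφub t ht') e1 (Real.exp_pos _).le hp2nn
          _ = C * (Real.exp (κ / 2) * (p₂.eval x * Real.exp (-(κ / 2 * x)))) := by
              rw [eexp]; ring
          _ ≤ C * (Real.exp (κ / 2) * C₀) := by
              apply mul_le_mul_of_nonneg_left _ hC
              exact mul_le_mul_of_nonneg_left (hC₀ x hx1t) (Real.exp_pos _).le
          _ ≤ c := by rw [hcdef]; linarith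
      calc V t ≤ C * (φ t * Real.exp (-δ * I)) := hbound t ht'
        _ = (C * (φ t * Real.exp (-(δ / 2) * I))) * Real.exp (-(δ / 2) * I) := by
            rw [hsplit]; ring
        _ ≤ c * Real.exp (-(δ / 2) * I) :=
            mul_le_mul_of_nonneg_right B1 (Real.exp_pos _).le
        _ = c * Real.exp (-(δ / 2 * I)) := by ring_nf

set_option maxHeartbeats 1600000 in
theorem stmt15 (T a₁ a₂ b₁ b₂ p₀ : ℝ) (hT : 0 < T) (hp₀ : 0 < p₀)
    (ha₁ : 0 < a₁) (ha₂ : 0 < a₂) (hb₁ : 0 < b₁) (hb₂ : 0 < b₂)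
    (hab : b₁ * b₂ < a₁ * a₂)
    (φ₁ φ₂ φ₁' φ₂' V₁ V₁' V₂ V₂' : ℝ → ℝ)
    (p₂ : Polynomial ℝ) (hp₂ : ∀ n, 0 ≤ p₂.coeff n)
    (hφ₁d : ∀ t ∈ Set.Ico 0 T, HasDerivAt φ₁ (φ₁' t) t)
    (hφ₂d : ∀ t ∈ Set.Ico 0 T, HasDerivAt φ₂ (φ₂' t) t)
    (hφ₁mono : MonotoneOn φ₁ (Set.Ico 0 T))
    (hφ₂mono : MonotoneOn φ₂ (Set.Ico 0 T))
    (hφ₁bd : ∀ t ∈ Set.Ico 0 T,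
      p₀ * (T / (T - t)) ^ 2 ≤ φ₁ t ∧ φ₁ t ≤ p₂.eval (T / (T - t)))
    (hφ₂bd : ∀ t ∈ Set.Ico 0 T,
      p₀ * (T / (T - t)) ^ 2 ≤ φ₂ t ∧ φ₂ t ≤ p₂.eval (T / (T - t)))
    (hV₁nn : ∀ t ∈ Set.Ico 0 T, 0 ≤ V₁ t) (hV₂nn : ∀ t ∈ Set.Ico 0 T, 0 ≤ V₂ t)
    (hderiv₁ : ∀ t ∈ Set.Ico 0 T, HasDerivAt V₁ (V₁' t) t)
    (hderiv₂ : ∀ t ∈ Set.Ico 0 T, HasDerivAt V₂ (V₂' t) t)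
    (hineq₁ : ∀ t ∈ Set.Ico 0 T, V₁' t ≤ φ₁ t * (-a₁ * V₁ t + b₁ * V₂ t))
    (hineq₂ : ∀ t ∈ Set.Ico 0 T, V₂' t ≤ φ₂ t * (-a₂ * V₂ t + b₂ * V₁ t)) :
    (∃ q₁ q₂ δ : ℝ, 0 < q₁ ∧ 0 < q₂ ∧ 0 < δ ∧
      ∀ t ∈ Set.Ico 0 T,
        q₁ * V₁ t / φ₁ t + q₂ * V₂ t / φ₂ t ≤
          (q₁ * V₁ 0 / φ₁ 0 + q₂ * V₂ 0 / φ₂ 0) *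
            Real.exp (-δ * ∫ s in (0:ℝ)..t, min (φ₁ s) (φ₂ s))) ∧
    Tendsto V₁ (nhdsWithin T (Set.Iio T)) (nhds 0) ∧
    Tendsto V₂ (nhdsWithin T (Set.Iio T)) (nhds 0) ∧
    PTExpConv T V₁ ∧ PTExpConv T V₂ := by
  have h0T : (0:ℝ) ∈ Set.Ico 0 T := ⟨le_refl 0, hT⟩
  -- choice of q₂ and δ
  set q₂ : ℝ := (b₁ / a₂ + a₁ / b₂) / 2 with hq₂def
  have hlu : b₁ / a₂ < a₁ / b₂ := by
    rw [div_lt_div_iff₀ ha₂ hb₂]; linarith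
  have hq₂ : 0 < q₂ := by rw [hq₂def]; positivity
  have hl : b₁ / a₂ < q₂ := by rw [hq₂def]; linarith
  have hu : q₂ < a₁ / b₂ := by rw [hq₂def]; linarith
  have h1 : b₁ < q₂ * a₂ := by rwa [div_lt_iff₀ ha₂] at hl
  have h2 : q₂ * b₂ < a₁ := by rwa [lt_div_iff₀ hb₂] at hu
  set δ : ℝ := min (a₁ - q₂ * b₂) ((q₂ * a₂ - b₁) / q₂) with hδdef
  have hδ : 0 < δ := lt_min (by linarith) (div_pos (by linarith) hq₂)
  have hδ1 : δ ≤ a₁ - q₂ * b₂ := min_le_left _ _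
  have hδ2 : δ * q₂ ≤ q₂ * a₂ - b₁ := by
    have h := min_le_right (a₁ - q₂ * b₂) ((q₂ * a₂ - b₁) / q₂)
    rw [← hδdef] at h
    exact (le_div_iff₀ hq₂).1 h
  -- positivity of φᵢ
  have hx1 : ∀ t ∈ Set.Ico (0:ℝ) T, 1 ≤ T / (T - t) := by
    intro t ht
    rw [one_le_div (sub_pos.2 ht.2)]
    linarith [ht.1]
  have hφ₁pos : ∀ t ∈ Set.Ico (0:ℝ) T, 0 < φ₁ t := by
    intro t ht
    have h := (hφ₁bd t ht).1
    have hx := hx1 t ht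
    nlinarith [h, hx, hp₀, mul_le_mul_of_nonneg_left (mul_le_mul hx hx zero_le_one (by linarith)) hp₀.le]
  have hφ₂pos : ∀ t ∈ Set.Ico (0:ℝ) T, 0 < φ₂ t := by
    intro t ht
    have h := (hφ₂bd t ht).1
    have hx := hx1 t ht
    nlinarith [h, hx, hp₀, mul_le_mul_of_nonneg_left (mul_le_mul hx hx zero_le_one (by linarith)) hp₀.le]
  have hd₁ := deriv_nonneg_of_monotoneOn hφ₁d hφ₁mono
  have hd₂ := deriv_nonneg_of_monotoneOn hφ₂d hφ₂mono
  -- the minimum function and its primitive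
  set m : ℝ → ℝ := fun s => min (φ₁ s) (φ₂ s) with hm
  set me : ℝ → ℝ := fun s => m (max s 0) with hme
  have hmc : ∀ s ∈ Set.Ico (0:ℝ) T, ContinuousAt m s := fun s hs =>
    (hφ₁d s hs).continuousAt.min (hφ₂d s hs).continuousAt
  have hmec : ∀ s ∈ Set.Iio T, ContinuousAt me s := by
    intro s hs
    have hmax : ContinuousAt (fun u : ℝ => max u 0) s :=
      (continuous_id.max continuous_const).continuousAt
    have hmem : max s 0 ∈ Set.Ico (0:ℝ) T := ⟨le_max_right s 0, max_lt hs hT⟩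
    have h2 : ContinuousAt (fun u : ℝ => m (max u 0)) s :=
      ContinuousAt.comp (g := m) (hmc _ hmem) hmax
    exact h2
  have hmeeq : ∀ s ∈ Set.Ico (0:ℝ) T, me s = m s := fun s hs => by
    simp [hme, max_eq_left hs.1]
  set M : ℝ → ℝ := fun u => ∫ s in (0:ℝ)..u, me s with hM
  have hmeint : ∀ t ∈ Set.Ico (0:ℝ) T, IntervalIntegrable me MeasureTheory.volume 0 t := by
    intro t ht
    rw [intervalIntegrable_iff_integrableOn_Icc_of_le ht.1]
    apply ContinuousOn.integrableOn_compact isCompact_Icc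
    exact fun s hs => (hmec s (lt_of_le_of_lt hs.2 ht.2)).continuousWithinAt
  have hmint : ∀ t ∈ Set.Ico (0:ℝ) T, IntervalIntegrable m MeasureTheory.volume 0 t := by
    intro t ht
    rw [intervalIntegrable_iff_integrableOn_Icc_of_le ht.1]
    apply ContinuousOn.integrableOn_compact isCompact_Icc
    exact fun s hs => (hmc s ⟨hs.1, lt_of_le_of_lt hs.2 ht.2⟩).continuousWithinAt
  have hMd : ∀ t ∈ Set.Ico (0:ℝ) T, HasDerivAt M (m t) t := by
    intro t ht
    have h := intervalIntegral.integral_hasDerivAt_right (hmeint t ht)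
      (ContinuousAt.stronglyMeasurableAtFilter isOpen_Iio (fun x hx => hmec x hx) t ht.2)
      (hmec t ht.2)
    rw [hmeeq t ht] at h
    exact h
  have hMcongr : ∀ t ∈ Set.Ico (0:ℝ) T, M t = ∫ s in (0:ℝ)..t, m s := by
    intro t ht
    apply intervalIntegral.integral_congr
    intro s hs
    rw [Set.uIcc_of_le ht.1] at hs
    exact hmeeq s ⟨hs.1, lt_of_le_of_lt hs.2 ht.2⟩
  have hmle₁ : ∀ s, m s ≤ φ₁ s := fun s => min_le_left _ _
  have hmle₂ : ∀ s, m s ≤ φ₂ s := fun s => min_le_right _ _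
  -- the Lyapunov function W and its derivative
  set W : ℝ → ℝ := fun u => V₁ u / φ₁ u + q₂ * V₂ u / φ₂ u with hW
  set DW : ℝ → ℝ := fun t =>
    (V₁' t * φ₁ t - V₁ t * φ₁' t) / φ₁ t ^ 2 +
      (q₂ * V₂' t * φ₂ t - q₂ * V₂ t * φ₂' t) / φ₂ t ^ 2 with hDW
  have hWd : ∀ t ∈ Set.Ico (0:ℝ) T, HasDerivAt W (DW t) t := fun t ht =>
    ((hderiv₁ t ht).div (hφ₁d t ht) (hφ₁pos t ht).ne').add
      (((hderiv₂ t ht).const_mul q₂).div (hφ₂d t ht) (hφ₂pos t ht).ne')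
  -- the key differential inequality
  have key : ∀ t ∈ Set.Ico (0:ℝ) T, DW t + δ * m t * W t ≤ 0 := by
    intro t ht
    have hφ1 := hφ₁pos t ht
    have hφ2 := hφ₂pos t ht
    have hV1 := hV₁nn t ht
    have hV2 := hV₂nn t ht
    have hd1' := hd₁ t ht
    have hd2' := hd₂ t ht
    have hi1 := hineq₁ t ht
    have hi2 := hineq₂ t ht
    have D1 : (V₁' t * φ₁ t - V₁ t * φ₁' t) / φ₁ t ^ 2 ≤ -a₁ * V₁ t + b₁ * V₂ t := by
      rw [div_le_iff₀ (by positivity)]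
      have h := mul_le_mul_of_nonneg_right hi1 hφ1.le
      nlinarith [mul_nonneg hV1 hd1', h]
    have D2 : (q₂ * V₂' t * φ₂ t - q₂ * V₂ t * φ₂' t) / φ₂ t ^ 2
        ≤ q₂ * (-a₂ * V₂ t + b₂ * V₁ t) := by
      rw [div_le_iff₀ (by positivity)]
      have h := mul_le_mul_of_nonneg_right hi2 hφ2.le
      nlinarith [mul_nonneg (mul_nonneg hq₂.le hV2) hd2',
        mul_le_mul_of_nonneg_left h hq₂.le]
    have hA : m t * (V₁ t / φ₁ t) ≤ V₁ t := by
      calc m t * (V₁ t / φ₁ t)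
          ≤ φ₁ t * (V₁ t / φ₁ t) :=
            mul_le_mul_of_nonneg_right (hmle₁ t) (div_nonneg hV1 hφ1.le)
        _ = V₁ t := by field_simp
    have hB : m t * (V₂ t / φ₂ t) ≤ V₂ t := by
      calc m t * (V₂ t / φ₂ t)
          ≤ φ₂ t * (V₂ t / φ₂ t) :=
            mul_le_mul_of_nonneg_right (hmle₂ t) (div_nonneg hV2 hφ2.le)
        _ = V₂ t := by field_simp
    have e1 : δ * (m t * (V₁ t / φ₁ t)) ≤ δ * V₁ t := mul_le_mul_of_nonneg_left hA hδ.le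
    have e2 : (δ * q₂) * (m t * (V₂ t / φ₂ t)) ≤ (δ * q₂) * V₂ t :=
      mul_le_mul_of_nonneg_left hB (by positivity)
    have e3 : δ * V₁ t ≤ (a₁ - q₂ * b₂) * V₁ t := mul_le_mul_of_nonneg_right hδ1 hV1
    have e4 : (δ * q₂) * V₂ t ≤ (q₂ * a₂ - b₁) * V₂ t := mul_le_mul_of_nonneg_right hδ2 hV2
    have expand : δ * m t * W t
        = δ * (m t * (V₁ t / φ₁ t)) + (δ * q₂) * (m t * (V₂ t / φ₂ t)) := by
      simp only [hW]; ring
    rw [hDW, expand]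
    linarith [D1, D2, e1, e2, e3, e4]
  -- Gronwall
  set G : ℝ → ℝ := fun u => W u * Real.exp (δ * M u) with hG
  have hGd : ∀ t ∈ Set.Ico (0:ℝ) T, HasDerivAt G
      (DW t * Real.exp (δ * M t) + W t * (Real.exp (δ * M t) * (δ * m t))) t := by
    intro t ht
    exact (hWd t ht).mul (((hMd t ht).const_mul δ).exp)
  have hGanti : AntitoneOn G (Set.Ico 0 T) := by
    apply antitoneOn_of_deriv_nonpos (convex_Ico 0 T)
    · exact fun t ht => (hGd t ht).continuousAt.continuousWithinAt
    · rw [interior_Ico]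
      exact fun t ht =>
        (hGd t (Set.Ioo_subset_Ico_self ht)).differentiableAt.differentiableWithinAt
    · rw [interior_Ico]
      intro t ht
      have ht' := Set.Ioo_subset_Ico_self ht
      rw [(hGd t ht').deriv]
      have h2 := mul_le_mul_of_nonneg_right (key t ht') (Real.exp_pos (δ * M t)).le
      nlinarith [h2]
  have hGr : ∀ t ∈ Set.Ico (0:ℝ) T,
      W t ≤ W 0 * Real.exp (-δ * ∫ s in (0:ℝ)..t, m s) := by
    intro t ht
    have h := hGanti h0T ht ht.1
    simp only [hG] at h
    have hM0 : M 0 = 0 := intervalIntegral.integral_same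
    rw [hM0, mul_zero, Real.exp_zero, mul_one] at h
    have h3 : W t ≤ W 0 * Real.exp (-(δ * M t)) := by
      rw [Real.exp_neg, ← div_eq_mul_inv]
      exact (le_div_iff₀ (Real.exp_pos _)).2 h
    rw [← hMcongr t ht, neg_mul]
    exact h3
  -- bounds for the individual signals
  have hW0 : 0 ≤ W 0 := by
    simp only [hW]
    exact add_nonneg (div_nonneg (hV₁nn 0 h0T) (hφ₁pos 0 h0T).le)
      (div_nonneg (mul_nonneg hq₂.le (hV₂nn 0 h0T)) (hφ₂pos 0 h0T).le)
  have hb1 : ∀ t ∈ Set.Ico (0:ℝ) T,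
      V₁ t ≤ W 0 * (φ₁ t * Real.exp (-δ * ∫ s in (0:ℝ)..t, m s)) := by
    intro t ht
    have hφ1 := hφ₁pos t ht
    have h1 : V₁ t / φ₁ t ≤ W t := by
      simp only [hW]
      have : 0 ≤ q₂ * V₂ t / φ₂ t :=
        div_nonneg (mul_nonneg hq₂.le (hV₂nn t ht)) (hφ₂pos t ht).le
      linarith
    have h2 := h1.trans (hGr t ht)
    calc V₁ t = V₁ t / φ₁ t * φ₁ t := (div_mul_cancel₀ _ hφ1.ne').symm
      _ ≤ (W 0 * Real.exp (-δ * ∫ s in (0:ℝ)..t, m s)) * φ₁ t :=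
          mul_le_mul_of_nonneg_right h2 hφ1.le
      _ = W 0 * (φ₁ t * Real.exp (-δ * ∫ s in (0:ℝ)..t, m s)) := by ring
  have hb2 : ∀ t ∈ Set.Ico (0:ℝ) T,
      V₂ t ≤ (W 0 / q₂) * (φ₂ t * Real.exp (-δ * ∫ s in (0:ℝ)..t, m s)) := by
    intro t ht
    have hφ2 := hφ₂pos t ht
    have h0 : q₂ * (V₂ t / φ₂ t) ≤ W t := by
      simp only [hW]
      have h1 : 0 ≤ V₁ t / φ₁ t := div_nonneg (hV₁nn t ht) (hφ₁pos t ht).le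
      rw [mul_div_assoc]
      linarith
    have h1 : V₂ t / φ₂ t ≤ W t / q₂ := (le_div_iff₀' hq₂).2 h0
    have h2 : W t / q₂ ≤ (W 0 * Real.exp (-δ * ∫ s in (0:ℝ)..t, m s)) / q₂ :=
      (div_le_div_iff_of_pos_right hq₂).2 (hGr t ht)
    calc V₂ t = V₂ t / φ₂ t * φ₂ t := (div_mul_cancel₀ _ hφ2.ne').symm
      _ ≤ ((W 0 * Real.exp (-δ * ∫ s in (0:ℝ)..t, m s)) / q₂) * φ₂ t :=
          mul_le_mul_of_nonneg_right (h1.trans h2) hφ2.le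
      _ = (W 0 / q₂) * (φ₂ t * Real.exp (-δ * ∫ s in (0:ℝ)..t, m s)) := by ring
  have aux1 := aux_conv T δ p₀ (W 0) hT hδ hp₀ hW0 p₂ V₁ φ₁ m hV₁nn
    (fun t ht => (hφ₁pos t ht).le) (fun t ht => (hφ₁bd t ht).2)
    (fun t ht => le_min (hφ₁bd t ht).1 (hφ₂bd t ht).1) hmint hb1
  have aux2 := aux_conv T δ p₀ (W 0 / q₂) hT hδ hp₀ (div_nonneg hW0 hq₂.le) p₂ V₂ φ₂ m hV₂nn
    (fun t ht => (hφ₂pos t ht).le) (fun t ht => (hφ₂bd t ht).2)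
    (fun t ht => le_min (hφ₁bd t ht).1 (hφ₂bd t ht).1) hmint hb2
  refine ⟨⟨1, q₂, δ, one_pos, hq₂, hδ, ?_⟩, aux1.1, aux2.1, aux1.2, aux2.2⟩
  intro t ht
  have h := hGr t ht
  simp only [hW] at h
  simpa [one_mul] using h
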